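/- arXiv:2301.12114 — 2 statements merged into one kernel-verified Lean document; each statement's English description precedes it below -/
import Mathlib

section
/- Let A be an associative k-algebra and φ : A → A a derivation. If f ∈ A* is such that ker f contains a two-sided ideal of A of finite codimension (i.e. f lies in the finite dual A⁰), then ker(f ∘ φ) also contains a two-sided ideal of A of finite codimension; that is, φ*(A⁰) ⊆ A⁰. -/
/-- Let `A` be an associative `k`-algebra and `φ : A → A` a derivation.  If `f ∈ A*` lies
in the finite dual `A⁰` (its kernel contains a two-sided ideal of finite codimension),
then so does `φ*(f) = f ∘ φ`; that is, `φ*(A⁰) ⊆ A⁰`. -/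
theorem deriv_dual_preserves_finite_dual
    {k A : Type} [Field k] [CharZero k] [Ring A] [Algebra k A]
    (φ : A →ₗ[k] A) (hφ : ∀ a b : A, φ (a * b) = φ a * b + a * φ b)
    (f : A →ₗ[k] k)
    (hf : ∃ I : Submodule k A,
      (∀ a : A, ∀ x ∈ I, a * x ∈ I) ∧ (∀ a : A, ∀ x ∈ I, x * a ∈ I) ∧
      FiniteDimensional k (A ⧸ I) ∧ I ≤ LinearMap.ker f) :
    ∃ I : Submodule k A,
      (∀ a : A, ∀ x ∈ I, a * x ∈ I) ∧ (∀ a : A, ∀ x ∈ I, x * a ∈ I) ∧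
      FiniteDimensional k (A ⧸ I) ∧ I ≤ LinearMap.ker (f ∘ₗ φ) := by
  obtain ⟨I, h1, h2, h3, h4⟩ := hf
  refine ⟨I ⊓ I.comap φ, ?_, ?_, ?_, ?_⟩
  · rintro a x ⟨hx1, hx2⟩
    refine ⟨h1 a x hx1, show φ (a * x) ∈ I from ?_⟩
    rw [hφ]
    exact I.add_mem (h1 (φ a) x hx1) (h1 a (φ x) hx2)
  · rintro a x ⟨hx1, hx2⟩
    refine ⟨h2 a x hx1, show φ (x * a) ∈ I from ?_⟩
    rw [hφ]
    exact I.add_mem (h2 a (φ x) hx2) (h2 (φ a) x hx1)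
  · have hker : LinearMap.ker (I.mkQ.comp φ) = I.comap φ := by
      rw [LinearMap.ker_comp, Submodule.ker_mkQ]
    have hq : FiniteDimensional k (A ⧸ I.comap φ) := by
      refine FiniteDimensional.of_injective
        (Submodule.liftQ (I.comap φ) (I.mkQ.comp φ) (le_of_eq hker.symm)) ?_
      rw [← LinearMap.ker_eq_bot]
      exact Submodule.ker_liftQ_eq_bot _ _ _ (le_of_eq hker)
    have hker2 : LinearMap.ker (I.mkQ.prod (I.comap φ).mkQ) = I ⊓ I.comap φ := by
      rw [LinearMap.ker_prod, Submodule.ker_mkQ, Submodule.ker_mkQ]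
    refine FiniteDimensional.of_injective
      (Submodule.liftQ (I ⊓ I.comap φ) (I.mkQ.prod (I.comap φ).mkQ)
        (le_of_eq hker2.symm)) ?_
    rw [← LinearMap.ker_eq_bot]
    exact Submodule.ker_liftQ_eq_bot _ _ _ (le_of_eq hker2)
  · rintro x ⟨hx1, hx2⟩
    simp only [LinearMap.mem_ker, LinearMap.comp_apply]
    exact h4 hx2
end

section
/- Let (C, ψ_C) be a Coder pair and (M, ρ_l, ρ_r, ψ_M) a bicomodule of (C, ψ_C). Then for every n ≥ 1 and every f ∈ C_c^n(M, C) = Hom_k(M, C^{⊗n}), one has δ_c(ω(f)) = ω(δ_c(f)); i.e. the maps δ_c and ω commute. -/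
open TensorProduct LinearMap

variable (k : Type) [Field k]

/-- Iterated tensor power: `Tpow k C n = C^{⊗(n+1)}`, right-nested. -/
noncomputable def Tpow (C : ModuleCat.{0} k) : ℕ → ModuleCat.{0} k
  | 0 => C
  | n + 1 => ModuleCat.of k (C ⊗[k] Tpow C n)

/-- `Id^{⊗ i} ⊗ Δ ⊗ Id^{⊗ (n - i)} : C^{⊗(n+1)} → C^{⊗(n+2)}`, applying `Δ` to the
`i`-th tensor factor (0-based). -/
noncomputable def insDelta (C : ModuleCat.{0} k) (Δ : C →ₗ[k] C ⊗[k] C) :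
    (n : ℕ) → Fin (n + 1) → (Tpow k C n →ₗ[k] Tpow k C (n + 1))
  | 0, _ => Δ
  | n + 1, i =>
    i.cases
      ((TensorProduct.assoc k C C (Tpow k C n)).toLinearMap ∘ₗ
        LinearMap.rTensor (Tpow k C n) Δ)
      (fun j => LinearMap.lTensor C (insDelta C Δ n j))

/-- `Id^{⊗ i} ⊗ ψ ⊗ Id^{⊗ (n - i)} : C^{⊗(n+1)} → C^{⊗(n+1)}`, applying `ψ` to the
`i`-th tensor factor (0-based). -/
noncomputable def psiAt (C : ModuleCat.{0} k) (ψ : C →ₗ[k] C) :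
    (n : ℕ) → Fin (n + 1) → (Tpow k C n →ₗ[k] Tpow k C n)
  | 0, _ => ψ
  | n + 1, i =>
    i.cases (LinearMap.rTensor (Tpow k C n) ψ)
      (fun j => LinearMap.lTensor C (psiAt C ψ n j))

/-- The canonical identification `C^{⊗(n+1)} ⊗ C ≅ C^{⊗(n+2)}`. -/
noncomputable def rshift (C : ModuleCat.{0} k) :
    (n : ℕ) → ((Tpow k C n) ⊗[k] C →ₗ[k] Tpow k C (n + 1))
  | 0 => LinearMap.id
  | n + 1 => LinearMap.lTensor C (rshift C n) ∘ₗ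
      (TensorProduct.assoc k C (Tpow k C n) C).toLinearMap

variable {k}

/-- The Hochschild coalgebra coboundary
`δ_c(f) = (Id_C ⊗ f) ∘ ρ_l + Σ_{i=1}^{n} (−1)^i (Id^{⊗(i−1)} ⊗ Δ ⊗ Id^{⊗(n−i)}) ∘ f
          + (−1)^{n+1} (f ⊗ Id_C) ∘ ρ_r`
for `f ∈ C_c^{n+1}(M, C) = Hom(M, C^{⊗(n+1)})`. -/
noncomputable def deltaC (C : ModuleCat.{0} k) (Δ : C →ₗ[k] C ⊗[k] C)
    (M : ModuleCat.{0} k) (ρl : M →ₗ[k] C ⊗[k] M) (ρr : M →ₗ[k] M ⊗[k] C)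
    (n : ℕ) (f : M →ₗ[k] Tpow k C n) : M →ₗ[k] Tpow k C (n + 1) :=
  (show (M : Type) →ₗ[k] Tpow k C (n + 1) from LinearMap.lTensor C f ∘ₗ ρl)
    + ∑ j : Fin (n + 1), ((-1 : ℤ) ^ (j.val + 1)) • (insDelta k C Δ n j ∘ₗ f)
    + ((-1 : ℤ) ^ (n + 2)) • (rshift k C n ∘ₗ LinearMap.rTensor C f ∘ₗ ρr)

/-- The operator `ω(f) = Σ_{i=1}^{n} (Id^{⊗(i−1)} ⊗ ψ_C ⊗ Id^{⊗(n−i)}) ∘ f − f ∘ ψ_M`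
for `f ∈ C_c^{n+1}(M, C) = Hom(M, C^{⊗(n+1)})`. -/
noncomputable def omegaC (C : ModuleCat.{0} k) (ψC : C →ₗ[k] C)
    (M : ModuleCat.{0} k) (ψM : M →ₗ[k] M)
    (n : ℕ) (f : M →ₗ[k] Tpow k C n) : M →ₗ[k] Tpow k C n :=
  (∑ j : Fin (n + 1), psiAt k C ψC n j ∘ₗ f) - f ∘ₗ ψM

attribute [reducible] Tpow

section Aux
variable {A A' B B' D D' : Type} [AddCommGroup A] [AddCommGroup A'] [AddCommGroup B]
  [AddCommGroup B'] [AddCommGroup D] [AddCommGroup D'] [Module k A] [Module k A']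
  [Module k B] [Module k B'] [Module k D] [Module k D']
theorem assoc_rTensor_rTensor (f : A →ₗ[k] A') :
    (TensorProduct.assoc k A' B D).toLinearMap ∘ₗ rTensor D (rTensor B f)
      = rTensor (B ⊗[k] D) f ∘ₗ (TensorProduct.assoc k A B D).toLinearMap := by
  apply TensorProduct.ext_threefold; intro x y z; simp
theorem assoc_rTensor_lTensor (g : B →ₗ[k] B') :
    (TensorProduct.assoc k A B' D).toLinearMap ∘ₗ rTensor D (lTensor A g)
      = lTensor A (rTensor D g) ∘ₗ (TensorProduct.assoc k A B D).toLinearMap := by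
  apply TensorProduct.ext_threefold; intro x y z; simp
theorem assoc_lTensor (h : D →ₗ[k] D') :
    (TensorProduct.assoc k A B D').toLinearMap ∘ₗ lTensor (A ⊗[k] B) h
      = lTensor A (lTensor B h) ∘ₗ (TensorProduct.assoc k A B D).toLinearMap := by
  apply TensorProduct.ext_threefold; intro x y z; simp
theorem rT_lT_comm (f : A →ₗ[k] A') (g : B →ₗ[k] B') :
    rTensor B' f ∘ₗ lTensor A g = lTensor A' g ∘ₗ rTensor B f := by
  rw [rTensor_comp_lTensor, lTensor_comp_rTensor]
end Aux

noncomputable def Psum (C : ModuleCat.{0} k) (ψ : C →ₗ[k] C) (n : ℕ) :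
    Tpow k C n →ₗ[k] Tpow k C n :=
  ∑ j : Fin (n + 1), psiAt k C ψ n j

theorem psum_zero (C : ModuleCat.{0} k) (ψ : C →ₗ[k] C) : Psum C ψ 0 = ψ := by
  simp [Psum, psiAt]

theorem psum_succ (C : ModuleCat.{0} k) (ψ : C →ₗ[k] C) (n : ℕ) :
    Psum C ψ (n + 1) = rTensor (Tpow k C n) ψ + lTensor C (Psum C ψ n) := by
  rw [Psum, Fin.sum_univ_succ]
  simp only [psiAt, Fin.cases_zero, Fin.cases_succ]
  congr 1
  rw [Psum]
  exact (map_sum (LinearMap.lTensorHom (R := k) (N := Tpow k C n) (P := Tpow k C n) C) _ _).symm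

theorem insDelta_psum (C : ModuleCat.{0} k) (Δ : C →ₗ[k] C ⊗[k] C) (ψC : C →ₗ[k] C)
    (hψC : Δ ∘ₗ ψC = LinearMap.rTensor C ψC ∘ₗ Δ + LinearMap.lTensor C ψC ∘ₗ Δ) :
    ∀ (n : ℕ) (j : Fin (n + 1)),
      insDelta k C Δ n j ∘ₗ Psum C ψC n = Psum C ψC (n + 1) ∘ₗ insDelta k C Δ n j := by
  intro n
  induction n with
  | zero =>
    intro j
    show Δ ∘ₗ Psum C ψC 0 = Psum C ψC 1 ∘ₗ Δ
    rw [psum_zero, psum_succ, psum_zero, hψC, add_comp]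
  | succ n ih =>
    intro j
    induction j using Fin.cases with
    | zero =>
      set a := (TensorProduct.assoc k C C (Tpow k C n)).toLinearMap with ha
      set r := rTensor (Tpow k C n) Δ with hrr
      show (a ∘ₗ r) ∘ₗ Psum C ψC (n + 1) = Psum C ψC (n + 2) ∘ₗ (a ∘ₗ r)
      have h1 : (a ∘ₗ r) ∘ₗ rTensor (Tpow k C n) ψC
          = (show Tpow k C (n + 1) →ₗ[k] Tpow k C (n + 2) from
              rTensor (Tpow k C (n + 1)) ψC ∘ₗ (a ∘ₗ r))
            + (show Tpow k C (n + 1) →ₗ[k] Tpow k C (n + 2) from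
              lTensor C (rTensor (Tpow k C n) ψC) ∘ₗ (a ∘ₗ r)) := by
        have n1 : a ∘ₗ rTensor (Tpow k C n) (rTensor C ψC)
            = rTensor (Tpow k C (n + 1)) ψC ∘ₗ (TensorProduct.assoc k C C (Tpow k C n)).toLinearMap :=
          assoc_rTensor_rTensor ψC
        have n2 : a ∘ₗ rTensor (Tpow k C n) (lTensor C ψC)
            = lTensor C (rTensor (Tpow k C n) ψC) ∘ₗ
                (TensorProduct.assoc k C C (Tpow k C n)).toLinearMap :=
          assoc_rTensor_lTensor ψC
        rw [comp_assoc, hrr, ← rTensor_comp, hψC, rTensor_add, rTensor_comp, rTensor_comp,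
          comp_add, ← comp_assoc, ← comp_assoc, n1, n2, comp_assoc, comp_assoc, ← ha, ← hrr]
      have h2 : (a ∘ₗ r) ∘ₗ lTensor C (Psum C ψC n)
          = lTensor C (lTensor C (Psum C ψC n)) ∘ₗ (a ∘ₗ r) := by
        have n3 : a ∘ₗ lTensor (C ⊗[k] C) (Psum C ψC n)
            = lTensor C (lTensor C (Psum C ψC n)) ∘ₗ
                (TensorProduct.assoc k C C (Tpow k C n)).toLinearMap :=
          assoc_lTensor (Psum C ψC n)
        rw [comp_assoc, hrr, rT_lT_comm Δ (Psum C ψC n), ← comp_assoc, n3,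
          comp_assoc, ← ha, ← hrr]
      rw [psum_succ C ψC (n + 1), psum_succ C ψC n, lTensor_add, comp_add, h1, h2,
        add_comp, add_comp]
      abel
    | succ j =>
      show lTensor C (insDelta k C Δ n j) ∘ₗ Psum C ψC (n + 1)
        = Psum C ψC (n + 2) ∘ₗ lTensor C (insDelta k C Δ n j)
      have hc : lTensor C (insDelta k C Δ n j) ∘ₗ rTensor (Tpow k C n) ψC
          = rTensor (Tpow k C (n + 1)) ψC ∘ₗ lTensor C (insDelta k C Δ n j) :=
        (rT_lT_comm ψC (insDelta k C Δ n j)).symm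
      rw [psum_succ C ψC n, psum_succ C ψC (n + 1), comp_add, add_comp, hc,
        ← lTensor_comp, ih j, lTensor_comp]

theorem rshift_psum (C : ModuleCat.{0} k) (ψC : C →ₗ[k] C) :
    ∀ (n : ℕ),
      rshift k C n ∘ₗ (rTensor C (Psum C ψC n) + lTensor (Tpow k C n) ψC)
        = Psum C ψC (n + 1) ∘ₗ rshift k C n := by
  intro n
  induction n with
  | zero =>
    show LinearMap.id ∘ₗ (rTensor C (Psum C ψC 0) + lTensor (Tpow k C 0) ψC)
      = Psum C ψC 1 ∘ₗ LinearMap.id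
    rw [psum_zero, psum_succ, psum_zero, id_comp, comp_id]
  | succ n ih =>
    set a := (TensorProduct.assoc k C (Tpow k C n) C).toLinearMap with ha
    show (lTensor C (rshift k C n) ∘ₗ a) ∘ₗ
        (rTensor C (Psum C ψC (n + 1)) + lTensor (Tpow k C (n + 1)) ψC)
      = Psum C ψC (n + 2) ∘ₗ (lTensor C (rshift k C n) ∘ₗ a)
    have e1 : (lTensor C (rshift k C n) ∘ₗ a) ∘ₗ rTensor C (rTensor (Tpow k C n) ψC)
        = (show Tpow k C (n + 1) ⊗[k] C →ₗ[k] Tpow k C (n + 2) from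
            rTensor (Tpow k C (n + 1)) ψC ∘ₗ (lTensor C (rshift k C n) ∘ₗ a)) := by
      have n1 : a ∘ₗ rTensor C (rTensor (Tpow k C n) ψC)
          = rTensor (Tpow k C n ⊗[k] C) ψC ∘ₗ
              (TensorProduct.assoc k C (Tpow k C n) C).toLinearMap :=
        assoc_rTensor_rTensor ψC
      have n2 : lTensor C (rshift k C n) ∘ₗ rTensor (Tpow k C n ⊗[k] C) ψC
          = rTensor (Tpow k C (n + 1)) ψC ∘ₗ lTensor C (rshift k C n) :=
        (rT_lT_comm ψC (rshift k C n)).symm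
      rw [comp_assoc, n1, ← comp_assoc, n2, comp_assoc, ← ha]
    have e2 : (lTensor C (rshift k C n) ∘ₗ a) ∘ₗ rTensor C (lTensor C (Psum C ψC n))
        = lTensor C (rshift k C n ∘ₗ rTensor C (Psum C ψC n)) ∘ₗ a := by
      have n1 : a ∘ₗ rTensor C (lTensor C (Psum C ψC n))
          = lTensor C (rTensor C (Psum C ψC n)) ∘ₗ
              (TensorProduct.assoc k C (Tpow k C n) C).toLinearMap :=
        assoc_rTensor_lTensor (Psum C ψC n)
      rw [comp_assoc, n1, ← comp_assoc, ← lTensor_comp, ← ha]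
    have e3 : (lTensor C (rshift k C n) ∘ₗ a) ∘ₗ lTensor (Tpow k C (n + 1)) ψC
        = lTensor C (rshift k C n ∘ₗ lTensor (Tpow k C n) ψC) ∘ₗ a := by
      have n1 : a ∘ₗ lTensor (Tpow k C (n + 1)) ψC
          = lTensor C (lTensor (Tpow k C n) ψC) ∘ₗ
              (TensorProduct.assoc k C (Tpow k C n) C).toLinearMap :=
        assoc_lTensor ψC
      rw [comp_assoc, n1, ← comp_assoc, ← lTensor_comp, ← ha]
    rw [psum_succ C ψC (n + 1), psum_succ C ψC n, rTensor_add, comp_add, add_comp,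
      comp_add, e1, e2, e3, add_assoc, ← add_comp, ← lTensor_add, ← comp_add, ih,
      psum_succ C ψC n, lTensor_comp, comp_assoc]


section Aux2
variable {A B D : Type} [AddCommGroup A] [AddCommGroup B] [AddCommGroup D]
  [Module k A] [Module k B] [Module k D]

theorem sum_comp' {ι : Type*} (s : Finset ι) (f : ι → (B →ₗ[k] D)) (g : A →ₗ[k] B) :
    (∑ i ∈ s, f i) ∘ₗ g = ∑ i ∈ s, f i ∘ₗ g :=
  map_sum (LinearMap.lcomp k D g) f s

theorem comp_sum' {ι : Type*} (g : B →ₗ[k] D) (s : Finset ι) (f : ι → (A →ₗ[k] B)) :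
    g ∘ₗ (∑ i ∈ s, f i) = ∑ i ∈ s, g ∘ₗ f i :=
  map_sum (LinearMap.llcomp k A B D g) f s

theorem comp_zsmul' (g : B →ₗ[k] D) (z : ℤ) (f : A →ₗ[k] B) :
    g ∘ₗ (z • f) = z • (g ∘ₗ f) :=
  map_zsmul (LinearMap.llcomp k A B D g) z f

theorem zsmul_comp' (z : ℤ) (g : B →ₗ[k] D) (f : A →ₗ[k] B) :
    (z • g) ∘ₗ f = z • (g ∘ₗ f) :=
  map_zsmul (LinearMap.lcomp k D f) z g

end Aux2

theorem omega_eq (C : ModuleCat.{0} k) (ψC : C →ₗ[k] C) (M : ModuleCat.{0} k)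
    (ψM : M →ₗ[k] M) (n : ℕ) (f : M →ₗ[k] Tpow k C n) :
    omegaC C ψC M ψM n f = Psum C ψC n ∘ₗ f - f ∘ₗ ψM := by
  rw [omegaC, Psum, sum_comp']

/-- For a Coder pair `(C, ψ_C)` and a bicomodule `(M, ρ_l, ρ_r, ψ_M)` over it, the
coboundary `δ_c` and the operator `ω` commute: `δ_c(ω(f)) = ω(δ_c(f))` for every
`n ≥ 1` and every `f ∈ C_c^n(M, C) = Hom(M, C^{⊗n})`
(here `f : M →ₗ Tpow k C n` represents an element of `C_c^{n+1}(M,C)`;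
as `n` runs over `ℕ` this covers all cochain degrees `≥ 1`). -/
theorem deltaC_omegaC_comm [CharZero k]
    (C : ModuleCat.{0} k) (Δ : C →ₗ[k] C ⊗[k] C)
    (hΔ : (TensorProduct.assoc k C C C).toLinearMap ∘ₗ LinearMap.rTensor C Δ ∘ₗ Δ
        = LinearMap.lTensor C Δ ∘ₗ Δ)
    (ψC : C →ₗ[k] C)
    (hψC : Δ ∘ₗ ψC = LinearMap.rTensor C ψC ∘ₗ Δ + LinearMap.lTensor C ψC ∘ₗ Δ)
    (M : ModuleCat.{0} k)
    (ρl : M →ₗ[k] C ⊗[k] M) (ρr : M →ₗ[k] M ⊗[k] C) (ψM : M →ₗ[k] M)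
    (hl : (TensorProduct.assoc k C C M).toLinearMap ∘ₗ LinearMap.rTensor M Δ ∘ₗ ρl
        = LinearMap.lTensor C ρl ∘ₗ ρl)
    (hr : (TensorProduct.assoc k M C C).toLinearMap ∘ₗ LinearMap.rTensor C ρr ∘ₗ ρr
        = LinearMap.lTensor M Δ ∘ₗ ρr)
    (hlr : LinearMap.lTensor C ρr ∘ₗ ρl
        = (TensorProduct.assoc k C M C).toLinearMap ∘ₗ LinearMap.rTensor C ρl ∘ₗ ρr)
    (hψl : ρl ∘ₗ ψM = LinearMap.lTensor C ψM ∘ₗ ρl + LinearMap.rTensor M ψC ∘ₗ ρl)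
    (hψr : ρr ∘ₗ ψM = LinearMap.rTensor C ψM ∘ₗ ρr + LinearMap.lTensor M ψC ∘ₗ ρr) :
    ∀ (n : ℕ) (f : M →ₗ[k] Tpow k C n),
      deltaC C Δ M ρl ρr n (omegaC C ψC M ψM n f)
        = omegaC C ψC M ψM (n + 1) (deltaC C Δ M ρl ρr n f) := by
  intro n f
  have m1 : rTensor (Tpow k C n) ψC ∘ₗ (lTensor C f ∘ₗ ρl)
      = lTensor C f ∘ₗ (rTensor M ψC ∘ₗ ρl) := by
    rw [← comp_assoc, rT_lT_comm ψC f, comp_assoc]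
  have m2 : lTensor C (Psum C ψC n) ∘ₗ (lTensor C f ∘ₗ ρl)
      = lTensor C (Psum C ψC n ∘ₗ f) ∘ₗ ρl := by
    rw [← comp_assoc, ← lTensor_comp]
  have K1 : Psum C ψC (n + 1) ∘ₗ (lTensor C f ∘ₗ ρl)
      = lTensor C (Psum C ψC n ∘ₗ f) ∘ₗ ρl + lTensor C f ∘ₗ (rTensor M ψC ∘ₗ ρl) := by
    rw [psum_succ, add_comp, m1, m2]
    abel
  have m4 : lTensor C f ∘ₗ (lTensor C ψM ∘ₗ ρl) = lTensor C (f ∘ₗ ψM) ∘ₗ ρl := by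
    rw [← comp_assoc, ← lTensor_comp]
  have K2 : (lTensor C f ∘ₗ ρl) ∘ₗ ψM
      = lTensor C (f ∘ₗ ψM) ∘ₗ ρl + lTensor C f ∘ₗ (rTensor M ψC ∘ₗ ρl) := by
    rw [comp_assoc, hψl, comp_add, m4]
  have K3a : ∀ j : Fin (n + 1),
      Psum C ψC (n + 1) ∘ₗ (insDelta k C Δ n j ∘ₗ f)
        = insDelta k C Δ n j ∘ₗ (Psum C ψC n ∘ₗ f) := by
    intro j
    rw [← comp_assoc, ← insDelta_psum C Δ ψC hψC n j, comp_assoc]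
  have K3b : ∀ j : Fin (n + 1),
      (insDelta k C Δ n j ∘ₗ f) ∘ₗ ψM = insDelta k C Δ n j ∘ₗ (f ∘ₗ ψM) :=
    fun j => comp_assoc _ _ _
  have m5 : rTensor C (Psum C ψC n) ∘ₗ (rTensor C f ∘ₗ ρr)
      = rTensor C (Psum C ψC n ∘ₗ f) ∘ₗ ρr := by
    rw [← comp_assoc, ← rTensor_comp]
  have K4 : Psum C ψC (n + 1) ∘ₗ (rshift k C n ∘ₗ rTensor C f ∘ₗ ρr)
      = rshift k C n ∘ₗ (rTensor C (Psum C ψC n ∘ₗ f) ∘ₗ ρr)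
        + rshift k C n ∘ₗ (lTensor (Tpow k C n) ψC ∘ₗ (rTensor C f ∘ₗ ρr)) := by
    rw [← comp_assoc, ← rshift_psum C ψC n, comp_assoc, add_comp, comp_add, m5]
  have mm1 : rTensor C f ∘ₗ (rTensor C ψM ∘ₗ ρr) = rTensor C (f ∘ₗ ψM) ∘ₗ ρr := by
    rw [← comp_assoc, ← rTensor_comp]
  have mm2 : rTensor C f ∘ₗ (lTensor M ψC ∘ₗ ρr)
      = lTensor (Tpow k C n) ψC ∘ₗ (rTensor C f ∘ₗ ρr) := by
    rw [← comp_assoc, rT_lT_comm f ψC, comp_assoc]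
  have m6 : (rTensor C f ∘ₗ ρr) ∘ₗ ψM
      = rTensor C (f ∘ₗ ψM) ∘ₗ ρr + lTensor (Tpow k C n) ψC ∘ₗ (rTensor C f ∘ₗ ρr) := by
    rw [comp_assoc, hψr, comp_add, mm1, mm2]
  have K5 : (rshift k C n ∘ₗ rTensor C f ∘ₗ ρr) ∘ₗ ψM
      = rshift k C n ∘ₗ (rTensor C (f ∘ₗ ψM) ∘ₗ ρr)
        + rshift k C n ∘ₗ (lTensor (Tpow k C n) ψC ∘ₗ (rTensor C f ∘ₗ ρr)) := by
    rw [comp_assoc, m6, comp_add]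
  rw [omega_eq, omega_eq, deltaC, deltaC]
  simp only [lTensor_sub, rTensor_sub, comp_sub, sub_comp, comp_add, add_comp,
    comp_sum', sum_comp', comp_zsmul', zsmul_comp']
  rw [K1, K2, K4, K5]
  simp only [K3a, K3b, smul_add, smul_sub, Finset.sum_sub_distrib, Finset.sum_add_distrib]
  abel
end
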